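/- Let ε be an integrable real-valued random variable whose law has a density f with respect to Lebesgue measure, satisfying P(ε ≤ 0) = 1/2, and suppose there exist constants c₀ > 0 and b₀ > 0 such that f(t) ≥ 1/c₀ for almost every t ∈ [-b₀, b₀]. Then for every M̃ > 0 there exists a constant γ_{M̃} > 0 such that for all real b with |b| ≤ M̃, E[|ε - b|] - E[|ε|] ≥ γ_{M̃} · b². (For instance γ_{M̃} = min{1/(2c₀), b₀²/(2c₀M̃²)} works.) -/

import Mathlib

open MeasureTheory

/-- The sign function used in the median argument: `1` on `(-∞,0]`, `-1` on `(0,∞)`. -/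
noncomputable def medSgn (x : ℝ) : ℝ := if x ≤ 0 then 1 else -1

lemma medSgn_eq (x : ℝ) :
    medSgn x = (Set.Iic (0:ℝ)).indicator (fun _ => (2:ℝ)) x - 1 := by
  unfold medSgn
  by_cases h : x ≤ 0
  · simp [Set.indicator, h]; norm_num
  · simp [Set.indicator, h]

lemma integrable_medSgn (ν : Measure ℝ) [IsFiniteMeasure ν] : Integrable medSgn ν := by
  have h : Integrable (fun x => (Set.Iic (0:ℝ)).indicator (fun _ => (2:ℝ)) x - 1) ν :=
    ((integrable_const (2:ℝ)).indicator measurableSet_Iic).sub (integrable_const 1)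
  exact h.congr (Filter.Eventually.of_forall fun x => (medSgn_eq x).symm)

lemma integral_medSgn (ν : Measure ℝ) [IsProbabilityMeasure ν] :
    ∫ x, medSgn x ∂ν = 2 * (ν (Set.Iic 0)).toReal - 1 := by
  simp_rw [medSgn_eq]
  rw [integral_sub (((integrable_const (2:ℝ)).indicator measurableSet_Iic))
      (integrable_const 1),
    integral_indicator_const _ measurableSet_Iic]
  simp [mul_comm]; rfl

/-- Core quantitative bound, for positive `b`, stated for the law `ν` on `ℝ`. -/
lemma medCore (ν : Measure ℝ) [IsProbabilityMeasure ν] (c₀ b₀ M b : ℝ)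
    (hc₀ : 0 < c₀) (hb₀ : 0 < b₀) (hb : 0 < b) (hbM : b ≤ M)
    (hint1 : Integrable (fun x => x) ν)
    (hs : ∫ x, medSgn x ∂ν = 0)
    (hmass : ∀ a : ℝ, 0 < a → a ≤ b₀ → ENNReal.ofReal (a / c₀) ≤ ν (Set.Ioc 0 a)) :
    min (1/(2*c₀)) (b₀^2/(2*c₀*M^2)) * b^2 ≤ (∫ x, |x - b| ∂ν) - ∫ x, |x| ∂ν := by
  set m := min b b₀ with hm
  have hm0 : 0 < m := lt_min hb hb₀
  have hmb : m ≤ b := min_le_left _ _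
  have hmb₀ : m ≤ b₀ := min_le_right _ _
  have hM : 0 < M := lt_of_lt_of_le hb hbM
  have hib : Integrable (fun x => |x - b|) ν := (hint1.sub (integrable_const b)).abs
  have hia : Integrable (fun x => |x|) ν := hint1.abs
  have hig : Integrable (fun x => |x - b| - |x|) ν := hib.sub hia
  have higs : Integrable (fun x => |x - b| - |x| - b * medSgn x) ν :=
    hig.sub ((integrable_medSgn ν).const_mul b)
  have hind : Integrable ((Set.Ioc (0:ℝ) (m/2)).indicator (fun _ => m)) ν :=
    (integrable_const m).indicator measurableSet_Ioc
  have hpt : ∀ x, (Set.Ioc (0:ℝ) (m/2)).indicator (fun _ => m) x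
      ≤ |x - b| - |x| - b * medSgn x := by
    intro x
    by_cases hx : x ∈ Set.Ioc (0:ℝ) (m/2)
    · have hx1 : 0 < x := hx.1
      have hx2 : x ≤ m / 2 := hx.2
      have hxb : x < b := lt_of_le_of_lt hx2 (by linarith)
      have hsx : medSgn x = -1 := if_neg (not_le.mpr hx1)
      rw [Set.indicator_of_mem hx, hsx,
        abs_of_nonpos (by linarith : x - b ≤ 0), abs_of_pos hx1]
      linarith
    · rw [Set.indicator_of_notMem hx]
      unfold medSgn
      split_ifs with h
      · rw [abs_of_nonpos (by linarith : x - b ≤ 0), abs_of_nonpos h]; linarith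
      · push_neg at h
        have h2 : |x| - |x - b| ≤ |x - (x - b)| := abs_sub_abs_le_abs_sub x (x - b)
        have h3 : x - (x - b) = b := by ring
        rw [h3, abs_of_pos hb] at h2
        linarith
  have key : ∫ x, ((Set.Ioc (0:ℝ) (m/2)).indicator (fun _ => m)) x ∂ν
      ≤ ∫ x, (|x - b| - |x| - b * medSgn x) ∂ν :=
    integral_mono hind higs hpt
  have h1 : ∫ x, (|x - b| - |x| - b * medSgn x) ∂ν
      = (∫ x, |x - b| ∂ν) - ∫ x, |x| ∂ν := by
    rw [integral_sub hig ((integrable_medSgn ν).const_mul b), integral_sub hib hia,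
      integral_const_mul, hs, mul_zero, sub_zero]
  have h2 : ∫ x, ((Set.Ioc (0:ℝ) (m/2)).indicator (fun _ => m)) x ∂ν
      = (ν (Set.Ioc 0 (m/2))).toReal * m := by
    rw [integral_indicator_const _ measurableSet_Ioc]; simp [smul_eq_mul]; exact Or.inl rfl
  have hmass' : m/(2*c₀) ≤ (ν (Set.Ioc 0 (m/2))).toReal := by
    have h3 := hmass (m/2) (by linarith) (by linarith)
    have h4 : (ENNReal.ofReal (m/2/c₀)).toReal ≤ (ν (Set.Ioc 0 (m/2))).toReal :=
      ENNReal.toReal_mono (measure_ne_top _ _) h3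
    rw [ENNReal.toReal_ofReal (by positivity), div_div] at h4
    exact h4
  have hfin : min (1/(2*c₀)) (b₀^2/(2*c₀*M^2)) * b^2 ≤ m * (m/(2*c₀)) := by
    rcases le_total b b₀ with h | h
    · rw [show m = b from hm.trans (min_eq_left h)]
      have h5 : min (1/(2*c₀)) (b₀^2/(2*c₀*M^2)) ≤ 1/(2*c₀) := min_le_left _ _
      have h6 : min (1/(2*c₀)) (b₀^2/(2*c₀*M^2)) * b^2 ≤ (1/(2*c₀)) * b^2 :=
        mul_le_mul_of_nonneg_right h5 (sq_nonneg b)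
      have h7 : (1/(2*c₀)) * b^2 = b * (b/(2*c₀)) := by ring
      linarith
    · rw [show m = b₀ from hm.trans (min_eq_right h)]
      have h5 : min (1/(2*c₀)) (b₀^2/(2*c₀*M^2)) * b^2 ≤ (b₀^2/(2*c₀*M^2)) * b^2 :=
        mul_le_mul_of_nonneg_right (min_le_right _ _) (sq_nonneg b)
      have h6 : (b₀^2/(2*c₀*M^2)) * b^2 ≤ (b₀^2/(2*c₀*M^2)) * M^2 := by
        apply mul_le_mul_of_nonneg_left _ (by positivity)
        nlinarith
      have h7 : (b₀^2/(2*c₀*M^2)) * M^2 = b₀ * (b₀/(2*c₀)) := by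
        field_simp
      linarith
  have h8 : m * (m/(2*c₀)) ≤ (ν (Set.Ioc 0 (m/2))).toReal * m := by
    nlinarith
  rw [h1] at key
  rw [h2] at key
  linarith

theorem expected_abs_dev_quadratic_growth {Ω : Type*} [MeasurableSpace Ω]
    (μ : Measure Ω) [IsProbabilityMeasure μ]
    (ε : Ω → ℝ) (hmeas : Measurable ε) (hint : Integrable ε μ)
    (f : ℝ → ℝ)
    (hdens : Measure.map ε μ = volume.withDensity fun t => ENNReal.ofReal (f t))
    (hmed : μ {ω | ε ω ≤ 0} = 1 / 2)
    (c₀ b₀ : ℝ) (hc₀ : 0 < c₀) (hb₀ : 0 < b₀)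
    (hlow : ∀ᵐ t ∂(volume.restrict (Set.Icc (-b₀) b₀)), 1 / c₀ ≤ f t) :
    ∀ M : ℝ, 0 < M → ∃ γ : ℝ, 0 < γ ∧ ∀ b : ℝ, |b| ≤ M →
      γ * b ^ 2 ≤ (∫ ω, |ε ω - b| ∂μ) - ∫ ω, |ε ω| ∂μ := by
  set ν := Measure.map ε μ with hνdef
  haveI : IsProbabilityMeasure ν := Measure.isProbabilityMeasure_map hmeas.aemeasurable
  have hIic : ν (Set.Iic 0) = 1/2 := by
    rw [hνdef, Measure.map_apply hmeas measurableSet_Iic]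
    exact hmed
  have hzero : ν {0} = 0 := by
    rw [hdens, withDensity_apply _ (measurableSet_singleton 0),
      show (volume.restrict {(0:ℝ)}) = 0 from
        Measure.restrict_eq_zero.mpr (measure_singleton 0)]
    exact lintegral_zero_measure _
  have hmassgen : ∀ S : Set ℝ, MeasurableSet S → S ⊆ Set.Icc (-b₀) b₀ →
      ENNReal.ofReal (1/c₀) * volume S ≤ ν S := by
    intro S hS hsub
    rw [hdens, withDensity_apply _ hS]
    calc ENNReal.ofReal (1/c₀) * volume S
        = ∫⁻ _ in S, ENNReal.ofReal (1/c₀) := (setLIntegral_const S _).symm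
      _ ≤ ∫⁻ x in S, ENNReal.ofReal (f x) := by
          refine lintegral_mono_ae ?_
          filter_upwards [ae_restrict_of_ae_restrict_of_subset hsub hlow] with x hx
          exact ENNReal.ofReal_le_ofReal hx
  have hintν : Integrable (fun x => x) ν :=
    (integrable_map_measure aestronglyMeasurable_id hmeas.aemeasurable).mpr hint
  have hsint : ∫ x, medSgn x ∂ν = 0 := by
    rw [integral_medSgn, hIic]
    norm_num
  have hcov : ∀ c : ℝ, ∫ ω, |ε ω - c| ∂μ = ∫ x, |x - c| ∂ν := by
    intro c
    exact (integral_map hmeas.aemeasurable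
      ((continuous_id.sub continuous_const).abs.aestronglyMeasurable
        (μ := Measure.map ε μ))).symm
  have hcov0 : ∫ ω, |ε ω| ∂μ = ∫ x, |x| ∂ν := by
    have := hcov 0
    simpa using this
  intro M hM
  refine ⟨min (1/(2*c₀)) (b₀^2/(2*c₀*M^2)), lt_min (by positivity) (by positivity), ?_⟩
  intro b hbM
  rcases lt_trichotomy b 0 with hb | hb | hb
  · -- negative case: use the pushforward under negation
    set ν' := ν.map (fun x : ℝ => -x) with hν'def
    haveI : IsProbabilityMeasure ν' := Measure.isProbabilityMeasure_map measurable_neg.aemeasurable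
    have hIio : ν (Set.Iio 0) = 1/2 := by
      have hset : Set.Iio (0:ℝ) = Set.Iic 0 \ {0} := by
        ext x; simp [lt_iff_le_and_ne]
      rw [hset, measure_diff_null hzero, hIic]
    have hIic' : ν' (Set.Iic 0) = 1/2 := by
      rw [hν'def, Measure.map_apply measurable_neg measurableSet_Iic]
      have hset : (fun x : ℝ => -x) ⁻¹' Set.Iic 0 = Set.Ici 0 := by
        ext x; simp
      rw [hset, ← Set.compl_Iio, measure_compl measurableSet_Iio (measure_ne_top _ _),
        hIio, measure_univ]
      exact ENNReal.sub_half ENNReal.one_ne_top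
    have hsint' : ∫ x, medSgn x ∂ν' = 0 := by
      rw [integral_medSgn, hIic']
      norm_num
    have hint1' : Integrable (fun x => x) ν' := by
      have := (integrable_map_measure aestronglyMeasurable_id
        measurable_neg.aemeasurable (μ := ν)).mpr hintν.neg
      exact this
    have hmass' : ∀ a : ℝ, 0 < a → a ≤ b₀ →
        ENNReal.ofReal (a / c₀) ≤ ν' (Set.Ioc 0 a) := by
      intro a ha hab
      rw [hν'def, Measure.map_apply measurable_neg measurableSet_Ioc]
      have hset : (fun x : ℝ => -x) ⁻¹' Set.Ioc 0 a = Set.Ico (-a) 0 := by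
        ext x
        simp only [Set.mem_preimage, Set.mem_Ioc, Set.mem_Ico]
        constructor <;> intro h <;> constructor <;> linarith [h.1, h.2]
      rw [hset]
      have := hmassgen (Set.Ico (-a) 0) measurableSet_Ico
        (fun x hx => ⟨by linarith [hx.1], by linarith [hx.2]⟩)
      rw [Real.volume_Ico, show (0:ℝ) - (-a) = a by ring,
        ← ENNReal.ofReal_mul (by positivity), show 1/c₀ * a = a/c₀ by ring] at this
      exact this
    have hcore := medCore ν' c₀ b₀ M (-b) hc₀ hb₀ (by linarith) (by
      have := abs_le.mp hbM; linarith [this.1]) hint1' hsint' hmass'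
    have e1 : ∫ x, |x - -b| ∂ν' = ∫ x, |x - b| ∂ν := by
      calc ∫ x, |x - -b| ∂ν' = ∫ x, |(-x) - -b| ∂ν := by
            exact integral_map measurable_neg.aemeasurable
              ((continuous_id.sub continuous_const).abs.aestronglyMeasurable)
        _ = ∫ x, |x - b| ∂ν := by
            refine integral_congr_ae (Filter.Eventually.of_forall fun x => ?_)
            show |-x - -b| = |x - b|
            rw [show -x - -b = -(x - b) by ring, abs_neg]
    have e2 : ∫ x, |x| ∂ν' = ∫ x, |x| ∂ν := by
      calc ∫ x, |x| ∂ν' = ∫ x, |(-x)| ∂ν := by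
            exact integral_map measurable_neg.aemeasurable
              (continuous_abs.aestronglyMeasurable)
        _ = ∫ x, |x| ∂ν := by
            refine integral_congr_ae (Filter.Eventually.of_forall fun x => ?_)
            exact abs_neg x
    rw [e1, e2, show (-b)^2 = b^2 by ring] at hcore
    rw [hcov b, hcov0]
    exact hcore
  · subst hb
    simp only [sub_zero, mul_zero, pow_two, zero_mul]
    simp [sub_self]
  · -- positive case
    have hcore := medCore ν c₀ b₀ M b hc₀ hb₀ hb (le_trans (le_abs_self b) hbM)
      hintν hsint (fun a ha hab => by
        have := hmassgen (Set.Ioc 0 a) measurableSet_Ioc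
          (fun x hx => ⟨by linarith [hx.1], le_trans hx.2 hab⟩)
        rw [Real.volume_Ioc, show a - 0 = a by ring,
          ← ENNReal.ofReal_mul (by positivity), show 1/c₀ * a = a/c₀ by ring] at this
        exact this)
    rw [hcov b, hcov0]
    exact hcore
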